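/- arXiv:2403.18798 — 7 statements merged into one kernel-verified Lean document; each statement's English description precedes it below -/
import Mathlib

section
/- Suppose P_α →_w P on (F, τ_uF) and (P_α) is asymptotically compact-bounded, i.e., for every ε > 0 there is a compact K with liminf_α P_α({F : F ⊆ K}) ≥ 1 − ε. Then limsup_α P_α(⋂_{F ∈ F*} H(F)) ≤ P(⋂_{F ∈ F*} H(F)) for every collection F* of closed subsets of E. Conversely, if P is compact-bounded (for each ε > 0 there is compact K with P({F : F ⊆ K}) ≥ 1 − ε) and the displayed inequality holds for all collections F* of closed sets, then P_α →_w P on (F, τ_uF) and (P_α) is asymptotically compact-bounded. -/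
open TopologicalSpace MeasureTheory Filter Set
open scoped ENNReal

/-- The hitting set `H(A)` of a subset `A ⊆ E`: all closed sets meeting `A`. -/
def hitting {E : Type*} [TopologicalSpace E] (A : Set E) : Set (Closeds E) :=
  {F | ((F : Set E) ∩ A).Nonempty}

/-- The missing set `M(A)` of a subset `A ⊆ E`: all closed sets disjoint from `A`. -/
def missing {E : Type*} [TopologicalSpace E] (A : Set E) : Set (Closeds E) :=
  {F | (F : Set E) ∩ A = ∅}

/-- The upper Fell topology on the hyperspace of closed sets. -/
def upperFell (E : Type*) [TopologicalSpace E] : TopologicalSpace (Closeds E) :=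
  generateFrom {U | ∃ K : Set E, IsCompact K ∧ U = missing K}

/-- The Fell topology on the hyperspace of closed sets. -/
def fell (E : Type*) [TopologicalSpace E] : TopologicalSpace (Closeds E) :=
  generateFrom ({U | ∃ K : Set E, IsCompact K ∧ U = missing K} ∪
    {U | ∃ G : Set E, IsOpen G ∧ U = hitting G})

/-- The Borel σ-algebra of the Fell topology (it coincides with that of the
upper Fell topology). -/
def borelFell (E : Type*) [TopologicalSpace E] : MeasurableSpace (Closeds E) :=
  @borel (Closeds E) (fell E)

/-- Weak convergence of a net of (probability) measures with respect to a
topology `t` on the hyperspace: limsup over every `t`-closed set is dominated. -/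
def WeakConvTo {E : Type*} [TopologicalSpace E] {ι : Type*} (l : Filter ι)
    (t : TopologicalSpace (Closeds E))
    (P : ι → @Measure (Closeds E) (borelFell E))
    (Q : @Measure (Closeds E) (borelFell E)) : Prop :=
  ∀ C : Set (Closeds E), @IsClosed _ t C → l.limsup (fun i => P i C) ≤ Q C


private lemma ennreal_limsup_add_le {ι : Type*} (l : Filter ι) (f g : ι → ℝ≥0∞) :
    l.limsup (fun i => f i + g i) ≤ l.limsup f + l.limsup g := by
  rcases eq_top_or_lt_top (l.limsup f) with hf | hf
  · rw [hf, top_add]; exact le_top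
  rcases eq_top_or_lt_top (l.limsup g) with hg | hg
  · rw [hg, add_top]; exact le_top
  refine ENNReal.le_of_forall_pos_le_add fun ε hε _ => ?_
  have hε2 : ((ε : ℝ≥0∞) / 2) ≠ 0 := by
    simp [ENNReal.div_eq_zero_iff, hε.ne']
  have h1 : ∀ᶠ i in l, f i < l.limsup f + ε / 2 :=
    eventually_lt_of_limsup_lt (ENNReal.lt_add_right hf.ne hε2)
  have h2 : ∀ᶠ i in l, g i < l.limsup g + ε / 2 :=
    eventually_lt_of_limsup_lt (ENNReal.lt_add_right hg.ne hε2)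
  refine limsup_le_of_le (by isBoundedDefault) ((h1.and h2).mono fun i ⟨hi1, hi2⟩ => ?_)
  calc f i + g i ≤ (l.limsup f + ε / 2) + (l.limsup g + ε / 2) :=
        add_le_add hi1.le hi2.le
    _ = l.limsup f + l.limsup g + (ε / 2 + ε / 2) := by ring
    _ = l.limsup f + l.limsup g + ε := by rw [ENNReal.add_halves]

private lemma limsup_one_sub_le {ι : Type*} (l : Filter ι) (a : ι → ℝ≥0∞)
    (ha : ∀ i, a i ≤ 1) :
    l.limsup (fun i => 1 - a i) ≤ 1 - l.liminf a := by
  rcases eq_or_neBot l with rfl | hne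
  · simp
  have hm1 : l.liminf a ≤ 1 := by
    refine le_trans (liminf_le_liminf (Eventually.of_forall ha)) ?_
    simp [liminf_const]
  refine ENNReal.le_of_forall_pos_le_add fun ε hε _ => ?_
  have hε' : (ε : ℝ≥0∞) ≠ 0 := by exact_mod_cast hε.ne'
  rcases le_or_gt (l.liminf a) ε with h | h
  · have hone : (1 : ℝ≥0∞) ≤ 1 - l.liminf a + ε :=
      le_trans le_tsub_add (add_le_add_right h _)
    exact le_trans (limsup_le_of_le (by isBoundedDefault)
      (Eventually.of_forall fun i => tsub_le_self)) hone
  · have hlt : l.liminf a - ε < l.liminf a :=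
      ENNReal.sub_lt_self (lt_of_le_of_lt hm1 ENNReal.one_lt_top).ne
        (pos_of_gt h).ne' hε'
    have hev := eventually_lt_of_lt_liminf hlt
    refine limsup_le_of_le (by isBoundedDefault) (hev.mono fun i hi => ?_)
    calc 1 - a i ≤ 1 - (l.liminf a - ε) := tsub_le_tsub_left hi.le 1
      _ ≤ 1 - l.liminf a + ε := tsub_tsub_le_tsub_add

private lemma le_liminf_one_sub {ι : Type*} (l : Filter ι) (b : ι → ℝ≥0∞)
    (hb : ∀ i, b i ≤ 1) :
    1 - l.limsup b ≤ l.liminf (fun i => 1 - b i) := by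
  rcases eq_or_neBot l with rfl | hne
  · simp
  have hM1 : l.limsup b ≤ 1 :=
    limsup_le_of_le (by isBoundedDefault) (Eventually.of_forall hb)
  refine ENNReal.le_of_forall_pos_le_add fun ε hε _ => ?_
  have hε' : (ε : ℝ≥0∞) ≠ 0 := by exact_mod_cast hε.ne'
  rw [← tsub_le_iff_right]
  have hev : ∀ᶠ i in l, b i < l.limsup b + ε :=
    eventually_lt_of_limsup_lt
      (ENNReal.lt_add_right (lt_of_le_of_lt hM1 ENNReal.one_lt_top).ne hε')
  refine le_trans ?_ (le_liminf_of_le (by isBoundedDefault)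
    (hev.mono fun i hi => tsub_le_tsub_left hi.le 1))
  rw [tsub_add_eq_tsub_tsub]

private lemma compl_missing {E : Type*} [TopologicalSpace E] (A : Set E) :
    (missing A)ᶜ = hitting A := by
  ext F; simp [_root_.hitting, missing, nonempty_iff_ne_empty]

private lemma upperFell_closed_struct {E : Type*} [TopologicalSpace E] {C : Set (Closeds E)}
    (hC : @IsClosed _ (upperFell E) C) :
    ∃ 𝒦 : Set (Set E), (∀ K ∈ 𝒦, IsCompact K) ∧ C = ⋂ K ∈ 𝒦, hitting K := by
  have hU : TopologicalSpace.GenerateOpen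
      {U : Set (Closeds E) | ∃ K : Set E, IsCompact K ∧ U = missing K} Cᶜ :=
    hC.isOpen_compl
  have key : ∀ U : Set (Closeds E), TopologicalSpace.GenerateOpen
      {U : Set (Closeds E) | ∃ K : Set E, IsCompact K ∧ U = missing K} U →
      ∃ 𝒦 : Set (Set E), (∀ K ∈ 𝒦, IsCompact K) ∧ U = ⋃ K ∈ 𝒦, missing K := by
    intro U hU
    induction hU with
    | basic V hV =>
      obtain ⟨K, hK, rfl⟩ := hV
      exact ⟨{K}, by simpa using hK, by simp⟩
    | univ =>
      refine ⟨{∅}, by simp [isCompact_empty], ?_⟩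
      ext F; simp [missing]
    | inter U V hU hV ihU ihV =>
      obtain ⟨𝒦₁, h1, e1⟩ := ihU
      obtain ⟨𝒦₂, h2, e2⟩ := ihV
      refine ⟨Set.image2 (· ∪ ·) 𝒦₁ 𝒦₂, ?_, ?_⟩
      · rintro K ⟨K1, hK1, K2, hK2, rfl⟩
        exact (h1 _ hK1).union (h2 _ hK2)
      · rw [e1, e2]
        ext F
        constructor
        · rintro ⟨hFU, hFV⟩
          simp only [mem_iUnion] at hFU hFV ⊢
          obtain ⟨K1, hK1, e1'⟩ := hFU
          obtain ⟨K2, hK2, e2'⟩ := hFV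
          refine ⟨K1 ∪ K2, mem_image2_of_mem hK1 hK2, ?_⟩
          have e1'' : (F : Set E) ∩ K1 = ∅ := e1'
          have e2'' : (F : Set E) ∩ K2 = ∅ := e2'
          show (F : Set E) ∩ (K1 ∪ K2) = ∅
          rw [inter_union_distrib_left, e1'', e2'', union_empty]
        · intro hF
          simp only [mem_iUnion] at hF
          obtain ⟨K, hKmem, hFK⟩ := hF
          obtain ⟨K1, hK1, K2, hK2, rfl⟩ := Set.mem_image2.mp hKmem
          have h : (F : Set E) ∩ (K1 ∪ K2) = ∅ := hFK
          rw [inter_union_distrib_left, union_empty_iff] at h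
          refine ⟨?_, ?_⟩ <;> simp only [mem_iUnion]
          · exact ⟨K1, hK1, h.1⟩
          · exact ⟨K2, hK2, h.2⟩
    | sUnion S hS ih =>
      choose! 𝒦 h1 h2 using ih
      refine ⟨⋃ s ∈ S, 𝒦 s, ?_, ?_⟩
      · rintro K hK
        simp only [mem_iUnion] at hK
        obtain ⟨s, hs, hKs⟩ := hK
        exact h1 s hs K hKs
      · ext F
        simp only [mem_sUnion, mem_iUnion]
        constructor
        · rintro ⟨s, hs, hF⟩
          rw [h2 s hs] at hF
          simp only [mem_iUnion] at hF
          obtain ⟨K, hK, hFK⟩ := hF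
          exact ⟨K, ⟨s, hs, hK⟩, hFK⟩
        · rintro ⟨K, ⟨s, hs, hK⟩, hFK⟩
          refine ⟨s, hs, ?_⟩
          rw [h2 s hs]
          simp only [mem_iUnion]
          exact ⟨K, hK, hFK⟩
  obtain ⟨𝒦, h1, h2⟩ := key _ hU
  refine ⟨𝒦, h1, ?_⟩
  have := congrArg compl h2
  rw [compl_compl] at this
  rw [this, compl_iUnion₂]
  exact iInter₂_congr fun K _ => compl_missing K

private lemma measurableSet_subK {E : Type*} [TopologicalSpace E] {K : Set E} (hK : IsClosed K) :
    MeasurableSet[borelFell E] {F : Closeds E | (F : Set E) ⊆ K} := by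
  have he : {F : Closeds E | (F : Set E) ⊆ K} = (hitting Kᶜ)ᶜ := by
    ext F
    simp [_root_.hitting, inter_compl_nonempty_iff]
  rw [he]
  refine MeasurableSet.compl ?_
  have hopen : @IsOpen _ (fell E) (hitting Kᶜ) :=
    isOpen_generateFrom_of_mem (Or.inr ⟨Kᶜ, hK.isOpen_compl, rfl⟩)
  exact MeasurableSpace.measurableSet_generateFrom hopen

/-- under asymptotic compact-boundedness, weak convergence on
`(F, τ_uF)` gives the limsup inequality over intersections of hitting sets of
closed sets; conversely, if the limit is compact-bounded, the inequality
implies weak convergence on `(F, τ_uF)` and asymptotic compact-boundedness. -/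
theorem stmt_2 {E : Type*} [TopologicalSpace E] [LocallyCompactSpace E]
    [SecondCountableTopology E] [T2Space E] {ι : Type*} (l : Filter ι) [l.NeBot]
    (P : ι → @Measure (Closeds E) (borelFell E)) (Q : @Measure (Closeds E) (borelFell E))
    (hP : ∀ i, IsProbabilityMeasure (P i)) (hQ : IsProbabilityMeasure Q) :
    ((WeakConvTo l (upperFell E) P Q ∧
        (∀ ε : ℝ≥0∞, 0 < ε → ∃ K : Set E, IsCompact K ∧
          1 - ε ≤ l.liminf (fun i => P i {F : Closeds E | (F : Set E) ⊆ K}))) →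
      ∀ 𝒻 : Set (Set E), (∀ F ∈ 𝒻, IsClosed F) →
        l.limsup (fun i => P i (⋂ F ∈ 𝒻, hitting F)) ≤ Q (⋂ F ∈ 𝒻, hitting F)) ∧
    (((∀ ε : ℝ≥0∞, 0 < ε → ∃ K : Set E, IsCompact K ∧
          1 - ε ≤ Q {F : Closeds E | (F : Set E) ⊆ K}) ∧
        (∀ 𝒻 : Set (Set E), (∀ F ∈ 𝒻, IsClosed F) →
          l.limsup (fun i => P i (⋂ F ∈ 𝒻, hitting F)) ≤ Q (⋂ F ∈ 𝒻, hitting F))) →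
      (WeakConvTo l (upperFell E) P Q ∧
        (∀ ε : ℝ≥0∞, 0 < ε → ∃ K : Set E, IsCompact K ∧
          1 - ε ≤ l.liminf (fun i => P i {F : Closeds E | (F : Set E) ⊆ K})))) := by
  constructor
  · rintro ⟨hWC, hT⟩ 𝒻 h𝒻
    set A := ⋂ F ∈ 𝒻, hitting F with hA
    refine ENNReal.le_of_forall_pos_le_add fun ε hε hQA => ?_
    obtain ⟨K, hKcomp, hKbd⟩ := hT ε (by exact_mod_cast hε)
    set C := ⋂ F ∈ 𝒻, hitting (F ∩ K) with hC
    set B := {F : Closeds E | (F : Set E) ⊆ K} with hB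
    have hBmeas : MeasurableSet[borelFell E] B := measurableSet_subK hKcomp.isClosed
    have hCclosed : @IsClosed _ (upperFell E) C := by
      letI := upperFell E
      refine isClosed_biInter fun F hF => ?_
      rw [← isOpen_compl_iff]
      have he : (hitting (F ∩ K))ᶜ = missing (F ∩ K) := by
        ext G; simp [_root_.hitting, missing, not_nonempty_iff_eq_empty]
      rw [he]
      exact isOpen_generateFrom_of_mem ⟨F ∩ K, hKcomp.inter_left (h𝒻 F hF), rfl⟩
    have hsub : A ⊆ C ∪ Bᶜ := by
      intro G hG
      by_cases hGK : (G : Set E) ⊆ K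
      · left
        rw [hA, mem_iInter₂] at hG
        rw [hC, mem_iInter₂]
        intro F hF
        obtain ⟨x, hxG, hxF⟩ := hG F hF
        exact ⟨x, hxG, hxF, hGK hxG⟩
      · right; exact hGK
    have step1 : ∀ i, P i A ≤ P i C + P i Bᶜ := fun i =>
      le_trans (measure_mono hsub) (measure_union_le _ _)
    have step5 : l.limsup (fun i => P i Bᶜ) ≤ ε := by
      have h1 : (fun i => P i Bᶜ) = fun i => 1 - P i B := by
        funext i
        haveI := hP i
        exact prob_compl_eq_one_sub hBmeas
      rw [h1]
      calc l.limsup (fun i => 1 - P i B)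
          ≤ 1 - l.liminf (fun i => P i B) :=
            limsup_one_sub_le _ _ (fun i => by haveI := hP i; exact prob_le_one)
        _ ≤ 1 - (1 - ε) := tsub_le_tsub_left hKbd 1
        _ ≤ ε := tsub_tsub_le
    have step6 : Q C ≤ Q A := by
      refine measure_mono ?_
      rw [hA, hC]
      refine iInter₂_mono fun F hF => ?_
      rintro G ⟨x, hxG, hxF, _⟩
      exact ⟨x, hxG, hxF⟩
    calc l.limsup (fun i => P i A)
        ≤ l.limsup (fun i => P i C + P i Bᶜ) :=
          limsup_le_limsup (Eventually.of_forall step1)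
      _ ≤ l.limsup (fun i => P i C) + l.limsup (fun i => P i Bᶜ) :=
          ennreal_limsup_add_le _ _ _
      _ ≤ Q C + ε := add_le_add (hWC C hCclosed) step5
      _ ≤ Q A + ε := add_le_add_left step6 _
  · rintro ⟨hQt, hB⟩
    constructor
    · intro C hC
      obtain ⟨𝒦, h1, rfl⟩ := upperFell_closed_struct hC
      exact hB 𝒦 (fun K hK => (h1 K hK).isClosed)
    · intro ε hε
      obtain ⟨K, hKc, hKQ⟩ := hQt ε hε
      obtain ⟨K', hK'c, hKK'⟩ := exists_compact_superset hKc
      refine ⟨K', hK'c, ?_⟩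
      set D := (interior K')ᶜ with hD
      have hDclosed : IsClosed D := isClosed_compl_iff.mpr isOpen_interior
      have hhit := hB {D} (by simpa using hDclosed)
      rw [show (⋂ F ∈ ({D} : Set (Set E)), hitting F) = hitting D by simp] at hhit
      have hsub1 : hitting D ⊆ {F : Closeds E | (F : Set E) ⊆ K}ᶜ := by
        rintro G ⟨x, hxG, hxD⟩ hGK
        exact hxD (hKK' (hGK hxG))
      have hQD : Q (hitting D) ≤ ε := by
        calc Q (hitting D) ≤ Q {F : Closeds E | (F : Set E) ⊆ K}ᶜ := measure_mono hsub1
          _ = 1 - Q {F : Closeds E | (F : Set E) ⊆ K} :=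
              prob_compl_eq_one_sub (measurableSet_subK hKc.isClosed)
          _ ≤ 1 - (1 - ε) := tsub_le_tsub_left hKQ 1
          _ ≤ ε := tsub_tsub_le
      have hsub2 : {F : Closeds E | (F : Set E) ⊆ K'}ᶜ ⊆ hitting D := by
        intro G hG
        obtain ⟨x, hxG, hxK'⟩ := not_subset.mp hG
        exact ⟨x, hxG, fun hx => hxK' (interior_subset hx)⟩
      have hlimsup : l.limsup (fun i => P i {F : Closeds E | (F : Set E) ⊆ K'}ᶜ) ≤ ε :=
        le_trans (le_trans
          (limsup_le_limsup (Eventually.of_forall fun i => measure_mono hsub2)) hhit) hQD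
      have key : (fun i => 1 - P i {F : Closeds E | (F : Set E) ⊆ K'}ᶜ) =
          fun i => P i {F : Closeds E | (F : Set E) ⊆ K'} := by
        funext i
        haveI := hP i
        rw [prob_compl_eq_one_sub (measurableSet_subK hK'c.isClosed),
          ENNReal.sub_sub_cancel ENNReal.one_ne_top prob_le_one]
      calc 1 - ε
          ≤ 1 - l.limsup (fun i => P i {F : Closeds E | (F : Set E) ⊆ K'}ᶜ) :=
            tsub_le_tsub_left hlimsup 1
        _ ≤ l.liminf (fun i => 1 - P i {F : Closeds E | (F : Set E) ⊆ K'}ᶜ) :=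
            le_liminf_one_sub _ _ (fun i => by haveI := hP i; exact prob_le_one)
        _ = l.liminf (fun i => P i {F : Closeds E | (F : Set E) ⊆ K'}) := by rw [key]
end

section
/- A net of probability measures (P_α) on (F, τ_uF) converges weakly to P if and only if limsup_α P_α(H(K₁) ∩ ⋯ ∩ H(Kₘ)) ≤ P(H(K₁) ∩ ⋯ ∩ H(Kₘ)) for every m ∈ ℕ and every finite collection K₁,…,Kₘ of non-empty compact subsets of E. -/
open TopologicalSpace MeasureTheory Filter Set
open scoped ENNReal

lemma missing_eq_compl_hitting {E : Type*} [TopologicalSpace E] (A : Set E) :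
    missing A = (_root_.hitting A)ᶜ := by
  ext F
  simp [missing, _root_.hitting, Set.not_nonempty_iff_eq_empty]

lemma hitting_eq_compl_missing {E : Type*} [TopologicalSpace E] (A : Set E) :
    _root_.hitting A = (missing A)ᶜ := by
  rw [missing_eq_compl_hitting, compl_compl]

lemma missing_anti {E : Type*} [TopologicalSpace E] {A B : Set E} (h : A ⊆ B) :
    missing B ⊆ missing A := by
  intro F hF
  simp only [missing, Set.mem_setOf_eq, ← Set.subset_empty_iff] at hF ⊢
  exact (Set.inter_subset_inter_right _ h).trans hF

lemma missing_inter {E : Type*} [TopologicalSpace E] (A B : Set E) :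
    missing A ∩ missing B = missing (A ∪ B) := by
  ext F
  simp only [missing, Set.mem_inter_iff, Set.mem_setOf_eq, Set.inter_union_distrib_left,
    Set.union_empty_iff]

lemma measurableSet_hitting {E : Type*} [TopologicalSpace E] {K : Set E} (hK : IsCompact K) :
    MeasurableSet[borelFell E] (_root_.hitting K) := by
  have h1 : MeasurableSet[borelFell E] (missing K) := by
    apply MeasurableSpace.measurableSet_generateFrom
    exact TopologicalSpace.GenerateOpen.basic _ (Or.inl ⟨K, hK, rfl⟩)
  rw [hitting_eq_compl_missing]
  exact h1.compl

lemma geom_family {E : Type*} [TopologicalSpace E] [LocallyCompactSpace E]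
    [SecondCountableTopology E] [T2Space E] :
    ∃ 𝒟 : Set (Set E), 𝒟.Countable ∧ (∀ D ∈ 𝒟, IsCompact D) ∧
      ∀ (K F : Set E), IsCompact K → IsClosed F → F ∩ K = ∅ →
        ∃ D ∈ 𝒟, F ∩ D = ∅ ∧ K ⊆ D := by
  classical
  set b := countableBasis E with hb
  have hbasis : IsTopologicalBasis b := isBasis_countableBasis E
  set Sg : Set (Set E) := {U ∈ b | IsCompact (closure U)} with hSg
  have hSgc : Sg.Countable := (countable_countableBasis E).mono (sep_subset _ _)
  refine ⟨(fun t => ⋃ U ∈ t, closure U) '' {t | t.Finite ∧ t ⊆ Sg},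
    (Set.Countable.mono ?_ (countable_setOf_finite_subset hSgc)).image _, ?_, ?_⟩
  · intro t ht; exact ⟨ht.1, ht.2⟩
  · rintro D ⟨t, ⟨htf, htS⟩, rfl⟩
    exact htf.isCompact_biUnion (fun U hU => (htS hU).2)
  · intro K F hK hF hdisj
    have hKF : K ⊆ Fᶜ := by
      intro x hx
      simp only [Set.mem_compl_iff]
      intro hxF
      exact absurd (Set.eq_empty_iff_forall_notMem.mp hdisj x ⟨hxF, hx⟩) (fun h => h)
    have key : ∀ x ∈ K, ∃ U, (U ∈ Sg ∧ closure U ⊆ Fᶜ) ∧ x ∈ U := by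
      intro x hx
      obtain ⟨C, hC, hxC, hCF⟩ := exists_compact_subset hF.isOpen_compl (hKF hx)
      obtain ⟨U, hUb, hxU, hUsub⟩ := hbasis.exists_subset_of_mem_open hxC isOpen_interior
      have hUc : closure U ⊆ C := closure_minimal (hUsub.trans interior_subset) hC.isClosed
      exact ⟨U, ⟨⟨hUb, hC.of_isClosed_subset isClosed_closure hUc⟩, hUc.trans hCF⟩, hxU⟩
    set B : Set (Set E) := {U | U ∈ Sg ∧ closure U ⊆ Fᶜ} with hB
    have hcover : K ⊆ ⋃ U ∈ B, U := by
      intro x hx; obtain ⟨U, hU, hxU⟩ := key x hx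
      exact Set.mem_biUnion hU hxU
    obtain ⟨t, htB, htfin, htcov⟩ := hK.elim_finite_subcover_image
      (fun U hU => hbasis.isOpen hU.1.1) hcover
    refine ⟨⋃ U ∈ t, closure U, ⟨t, ⟨htfin, fun U hU => (htB hU).1⟩, rfl⟩, ?_, ?_⟩
    · apply Set.eq_empty_iff_forall_notMem.mpr
      rintro x ⟨hxF, hxD⟩
      obtain ⟨U, hU, hxU⟩ := Set.mem_iUnion₂.mp hxD
      exact (htB hU).2 hxU hxF
    · exact htcov.trans (Set.iUnion₂_mono fun U _ => subset_closure)

lemma upperFell_open_locally {E : Type*} [TopologicalSpace E] {U : Set (Closeds E)}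
    (h : TopologicalSpace.GenerateOpen {U | ∃ K : Set E, IsCompact K ∧ U = missing K} U) :
    ∀ F ∈ U, ∃ K : Set E, IsCompact K ∧ F ∈ missing K ∧ missing K ⊆ U := by
  induction h with
  | basic V hV =>
    obtain ⟨K, hK, rfl⟩ := hV
    exact fun F hF => ⟨K, hK, hF, subset_rfl⟩
  | univ =>
    intro F _
    refine ⟨∅, isCompact_empty, ?_, Set.subset_univ _⟩
    simp [missing]
  | inter V W _ _ ihV ihW =>
    rintro F ⟨hFV, hFW⟩
    obtain ⟨K1, hK1, hF1, hs1⟩ := ihV F hFV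
    obtain ⟨K2, hK2, hF2, hs2⟩ := ihW F hFW
    refine ⟨K1 ∪ K2, hK1.union hK2, ?_, ?_⟩
    · rw [← missing_inter]; exact ⟨hF1, hF2⟩
    · rw [← missing_inter]
      exact fun G hG => ⟨hs1 hG.1, hs2 hG.2⟩
  | sUnion S _ ih =>
    rintro F hF
    obtain ⟨V, hVS, hFV⟩ := hF
    obtain ⟨K, hK, hFK, hs⟩ := ih V hVS F hFV
    exact ⟨K, hK, hFK, hs.trans (Set.subset_sUnion_of_mem hVS)⟩

/-- Every upper-Fell-closed set is a countable intersection of hitting sets of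
compact sets. -/
lemma upperFell_closed_decomp {E : Type*} [TopologicalSpace E] [LocallyCompactSpace E]
    [SecondCountableTopology E] [T2Space E] {C : Set (Closeds E)}
    (hC : @IsClosed _ (upperFell E) C) :
    ∃ S : Set (Set E), S.Countable ∧ (∀ K ∈ S, IsCompact K) ∧
      C = ⋂ K ∈ S, _root_.hitting K := by
  obtain ⟨𝒟, h𝒟c, h𝒟k, h𝒟⟩ := geom_family (E := E)
  refine ⟨{D ∈ 𝒟 | missing D ⊆ Cᶜ}, h𝒟c.mono (sep_subset _ _),
    fun D hD => h𝒟k D hD.1, ?_⟩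
  have hopen : TopologicalSpace.GenerateOpen
      {U | ∃ K : Set E, IsCompact K ∧ U = missing K} Cᶜ := hC.isOpen_compl
  have hcompl : Cᶜ = ⋃ D ∈ {D ∈ 𝒟 | missing D ⊆ Cᶜ}, missing D := by
    apply Set.Subset.antisymm
    · intro F hF
      obtain ⟨K, hK, hFK, hsub⟩ := upperFell_open_locally hopen F hF
      obtain ⟨D, hD𝒟, hFD, hKD⟩ := h𝒟 K (F : Set E) hK F.2 hFK
      exact Set.mem_biUnion ⟨hD𝒟, (missing_anti hKD).trans hsub⟩ hFD
    · intro F hF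
      obtain ⟨D, hD, hFD⟩ := Set.mem_iUnion₂.mp hF
      exact hD.2 hFD
  have hC2 : C = ⋂ D ∈ {D ∈ 𝒟 | missing D ⊆ Cᶜ}, (missing D)ᶜ := by
    rw [← Set.compl_iUnion₂, ← hcompl, compl_compl]
  conv_lhs => rw [hC2]
  exact Set.iInter₂_congr fun D _ => by rw [missing_eq_compl_hitting, compl_compl]

lemma upperFell_isClosed_iInter_hitting {E : Type*} [TopologicalSpace E] {m : ℕ}
    {K : Fin m → Set E} (hK : ∀ i, IsCompact (K i)) :
    @IsClosed _ (upperFell E) (⋂ j, _root_.hitting (K j)) := by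
  letI : TopologicalSpace (Closeds E) := upperFell E
  rw [← isOpen_compl_iff, Set.compl_iInter]
  apply isOpen_iUnion
  intro j
  rw [← missing_eq_compl_hitting]
  exact TopologicalSpace.GenerateOpen.basic _ ⟨K j, hK j, rfl⟩

/-- weak convergence on `(F, τ_uF)` is equivalent to the limsup
inequality over all finite intersections of hitting sets of non-empty compact
sets. -/
theorem stmt_3 {E : Type*} [TopologicalSpace E] [LocallyCompactSpace E]
    [SecondCountableTopology E] [T2Space E] {ι : Type*} (l : Filter ι) [l.NeBot]
    (P : ι → @Measure (Closeds E) (borelFell E)) (Q : @Measure (Closeds E) (borelFell E))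
    (hP : ∀ i, IsProbabilityMeasure (P i)) (hQ : IsProbabilityMeasure Q) :
    WeakConvTo l (upperFell E) P Q ↔
      ∀ (m : ℕ) (K : Fin m → Set E), (∀ i, IsCompact (K i)) → (∀ i, (K i).Nonempty) →
        l.limsup (fun i => P i (⋂ j, hitting (K j))) ≤ Q (⋂ j, hitting (K j)) := by
  constructor
  · intro h m K hKc _
    exact h _ (upperFell_isClosed_iInter_hitting hKc)
  · intro h C hC
    letI : MeasurableSpace (Closeds E) := borelFell E
    obtain ⟨S, hSc, hSk, rfl⟩ := upperFell_closed_decomp hC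
    rcases Set.eq_empty_or_nonempty S with hS | hS
    · subst hS
      simpa using h 0 (fun j => j.elim0) (fun j => j.elim0) (fun j => j.elim0)
    obtain ⟨f, rfl⟩ := hSc.exists_eq_range hS
    have hfk : ∀ n, IsCompact (f n) := fun n => hSk _ ⟨n, rfl⟩
    rw [Set.biInter_range]
    by_cases hne : ∃ n, f n = ∅
    · obtain ⟨n, hn⟩ := hne
      have hCempty : (⋂ n, _root_.hitting (f n)) = ∅ := by
        apply Set.eq_empty_iff_forall_notMem.mpr
        intro F hF
        have := Set.mem_iInter.mp hF n
        rw [hn] at this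
        simpa [_root_.hitting] using this
      rw [hCempty]
      simp only [measure_empty]
      simpa using limsup_const (f := l) (0 : ℝ≥0∞)
    push_neg at hne
    set s : ℕ → Set (Closeds E) := fun m => ⋂ j : Fin m, _root_.hitting (f j) with hs
    have hsC : (⋂ m, s m) = ⋂ n, _root_.hitting (f n) := by
      apply Set.Subset.antisymm
      · intro F hF
        apply Set.mem_iInter.mpr
        intro n
        have := Set.mem_iInter.mp hF (n + 1)
        exact Set.mem_iInter.mp this ⟨n, Nat.lt_succ_self n⟩
      · intro F hF
        apply Set.mem_iInter.mpr
        intro m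
        exact Set.mem_iInter.mpr fun j => Set.mem_iInter.mp hF j
    have hmeas : ∀ m, NullMeasurableSet (s m) Q := fun m =>
      MeasurableSet.nullMeasurableSet (μ := Q)
        (MeasurableSet.iInter fun j => measurableSet_hitting (hfk j))
    have hanti : Antitone s := by
      intro a b hab F hF
      exact Set.mem_iInter.mpr fun j => Set.mem_iInter.mp hF ⟨j, lt_of_lt_of_le j.2 hab⟩
    have htend : Tendsto (fun m => Q (s m)) atTop (nhds (Q (⋂ m, s m))) :=
      tendsto_measure_iInter_atTop hmeas hanti ⟨0, measure_ne_top Q _⟩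
    rw [hsC] at htend
    apply ge_of_tendsto' htend
    intro m
    calc l.limsup (fun i => P i (⋂ n, _root_.hitting (f n)))
        ≤ l.limsup (fun i => P i (s m)) :=
          Filter.limsup_le_limsup (Filter.Eventually.of_forall fun i =>
            measure_mono (by rw [← hsC]; exact Set.iInter_subset s m))
      _ ≤ Q (s m) := h m (fun j => f j) (fun j => hfk j) (fun j => hne j)
end

section
/- Let (P_α) be a net of probability measures on F such that: (i) P_α →_w P on (F, τ_uF); (ii) for each ε > 0 there is a compact K with liminf_α P_α({F ∈ F : ∅ ≠ F ⊆ K}) ≥ 1 − ε; and (iii) P(F_{0,1}) = 1, where F_{0,1} = {∅} ∪ {{x} : x ∈ E}. Then P_α →_w P on (F, τ_F). -/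
open TopologicalSpace MeasureTheory Filter Set
open scoped ENNReal

/-! ### Auxiliary lemmas -/

lemma my_limsup_add_le {ι : Type*} (l : Filter ι) (u v : ι → ℝ≥0∞) :
    l.limsup (fun i => u i + v i) ≤ l.limsup u + l.limsup v := by
  rcases eq_top_or_lt_top (l.limsup u) with hu | hu
  · rw [hu, top_add]; exact le_top
  rcases eq_top_or_lt_top (l.limsup v) with hv | hv
  · rw [hv, add_top]; exact le_top
  refine ENNReal.le_of_forall_pos_le_add fun ε hε _ => ?_
  have h2 : (0 : ℝ≥0∞) < ε / 2 := ENNReal.half_pos (by exact_mod_cast hε.ne')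
  have hu' : l.limsup u < l.limsup u + ε / 2 := ENNReal.lt_add_right hu.ne h2.ne'
  have hv' : l.limsup v < l.limsup v + ε / 2 := ENNReal.lt_add_right hv.ne h2.ne'
  have hev : ∀ᶠ i in l, u i + v i ≤ (l.limsup u + ε / 2) + (l.limsup v + ε / 2) := by
    filter_upwards [eventually_lt_of_limsup_lt hu', eventually_lt_of_limsup_lt hv'] with i g1 g2
    exact add_le_add g1.le g2.le
  calc l.limsup (fun i => u i + v i)
      ≤ (l.limsup u + ε / 2) + (l.limsup v + ε / 2) := limsup_le_of_le (by isBoundedDefault) hev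
    _ = l.limsup u + l.limsup v + ε := by
        rw [add_add_add_comm, ENNReal.add_halves]

/-- the point embedding into the hyperspace -/
def sing {E : Type*} [TopologicalSpace E] [T2Space E] (x : E) : Closeds E :=
  ⟨{x}, isClosed_singleton⟩

/-- Subbasic missing sets are upper-Fell open. -/
lemma isOpen_missing_uF {E : Type*} [TopologicalSpace E] {K : Set E} (hK : IsCompact K) :
    @IsOpen _ (upperFell E) (missing K) :=
  TopologicalSpace.GenerateOpen.basic _ ⟨K, hK, rfl⟩

lemma isOpen_hitting_fell {E : Type*} [TopologicalSpace E] {G : Set E} (hG : IsOpen G) :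
    @IsOpen _ (fell E) (_root_.hitting G) :=
  TopologicalSpace.GenerateOpen.basic _ (Or.inr ⟨G, hG, rfl⟩)

/-- Fell-open sets are Borel. -/
lemma measurableSet_of_fell_open {E : Type*} [TopologicalSpace E] {U : Set (Closeds E)}
    (hU : @IsOpen _ (fell E) U) : MeasurableSet[borelFell E] U :=
  MeasurableSpace.measurableSet_generateFrom hU

/-- The collection of subsingleton closed sets is Fell-closed. -/
lemma isClosed_subsingleton_fell {E : Type*} [TopologicalSpace E] [T2Space E] :
    @IsClosed _ (fell E) {F : Closeds E | (F : Set E).Subsingleton} := by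
  letI := fell E
  rw [← isOpen_compl_iff, isOpen_iff_forall_mem_open]
  rintro F hF
  simp only [mem_compl_iff, mem_setOf_eq, Set.Subsingleton] at hF
  push_neg at hF
  obtain ⟨x, hx, y, hy, hxy⟩ := hF
  obtain ⟨G₁, G₂, hG₁, hG₂, hxG, hyG, hdisj⟩ := t2_separation hxy
  refine ⟨_root_.hitting G₁ ∩ _root_.hitting G₂, ?_, ?_, ⟨⟨x, hx, hxG⟩, ⟨y, hy, hyG⟩⟩⟩
  · rintro F' ⟨⟨a, haF, haG⟩, ⟨b, hbF, hbG⟩⟩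
    simp only [mem_compl_iff, mem_setOf_eq, Set.Subsingleton]
    intro h
    have hab : a = b := h haF hbF
    have : a ∈ G₁ ∩ G₂ := ⟨haG, hab ▸ hbG⟩
    rw [hdisj.inter_eq] at this
    exact this.elim
  · exact (isOpen_hitting_fell hG₁).inter (isOpen_hitting_fell hG₂)

/-- The key geometric lemma: a subsingleton closed set in the upper-Fell closure of
`C ∩ {F | F nonempty и F ⊆ K}` belongs to any Fell-closed `C`. -/
lemma key_lemma {E : Type*} [TopologicalSpace E] [LocallyCompactSpace E] [T2Space E]
    {C : Set (Closeds E)} (hC : @IsClosed _ (fell E) C) {K : Set E} (hK : IsCompact K)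
    {F₀ : Closeds E} (hss : (F₀ : Set E).Subsingleton)
    (hF₀ : F₀ ∈ @closure _ (upperFell E)
      (C ∩ {F : Closeds E | (F : Set E).Nonempty ∧ (F : Set E) ⊆ K})) :
    F₀ ∈ C := by
  set T : Set (Closeds E) := {F : Closeds E | (F : Set E).Nonempty ∧ (F : Set E) ⊆ K} with hT
  by_contra hFC
  have hCc : @IsOpen _ (fell E) Cᶜ := by
    letI := fell E
    exact hC.isOpen_compl
  have hFC' : F₀ ∈ Cᶜ := hFC
  obtain ⟨v, ⟨f, ⟨hfin, hfs⟩, rfl⟩, hF₀v, hvC⟩ :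
      ∃ v ∈ (fun f : Set (Set (Closeds E)) => ⋂₀ f) '' {f : Set (Set (Closeds E)) | f.Finite ∧
        f ⊆ ({U | ∃ K : Set E, IsCompact K ∧ U = missing K} ∪
          {U | ∃ G : Set E, IsOpen G ∧ U = _root_.hitting G})}, F₀ ∈ v ∧ v ⊆ Cᶜ := by
    letI := fell E
    exact (isTopologicalBasis_of_subbasis rfl).exists_subset_of_mem_open hFC' hCc
  have hclo : ∀ V : Set (Closeds E), @IsOpen _ (upperFell E) V → F₀ ∈ V →
      (V ∩ (C ∩ T)).Nonempty := by
    letI := upperFell E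
    exact fun V hV hFV => mem_closure_iff.mp hF₀ V hV hFV
  rcases hss.eq_empty_or_singleton with hemp | ⟨x, hxeq⟩
  · -- empty case : all members of f are missing sets
    have hall : ∀ A ∈ f, ∃ K' : Set E, IsCompact K' ∧ A = missing K' := by
      intro A hA
      rcases hfs hA with h | ⟨G, hG, rfl⟩
      · exact h
      · exfalso
        have := mem_sInter.mp hF₀v _ hA
        simp only [_root_.hitting, mem_setOf_eq, hemp, Set.empty_inter] at this
        exact this.ne_empty rfl
    have hopen : @IsOpen _ (upperFell E) (⋂₀ f) := by
      letI := upperFell E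
      refine Set.Finite.isOpen_sInter hfin ?_
      intro A hA
      obtain ⟨K', hK', rfl⟩ := hall A hA
      exact isOpen_missing_uF hK'
    obtain ⟨F, hFv, hFCT⟩ := hclo _ hopen hF₀v
    exact hvC hFv hFCT.1
  · -- singleton case
    have hsingF : F₀ = sing x := SetLike.coe_injective hxeq
    set G : Set E := sing ⁻¹' (⋂₀ f) with hG
    have hGopen : IsOpen G := by
      rw [hG, Set.preimage_sInter]
      refine Set.Finite.isOpen_biInter hfin ?_
      intro A hA
      rcases hfs hA with ⟨K', hK', rfl⟩ | ⟨G', hG', rfl⟩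
      · have heq : sing ⁻¹' (missing K') = K'ᶜ := by
          ext y
          simp [sing, missing, Set.singleton_inter_eq_empty]
        rw [heq]
        exact hK'.isClosed.isOpen_compl
      · have heq : sing ⁻¹' (_root_.hitting G') = G' := by
          ext y
          simp [sing, _root_.hitting, Set.singleton_inter_nonempty]
        rw [heq]
        exact hG'
    have hxG : x ∈ G := by
      have hmem := hF₀v
      rw [hsingF] at hmem
      simpa [hG, Set.mem_preimage] using hmem
    obtain ⟨L, hL, hxL, hLG⟩ := exists_compact_subset hGopen hxG
    have hKdiff : IsCompact (K \ interior L) := hK.diff isOpen_interior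
    have hVopen : @IsOpen _ (upperFell E) (missing (K \ interior L)) := isOpen_missing_uF hKdiff
    have hF₀V : F₀ ∈ missing (K \ interior L) := by
      simp only [missing, mem_setOf_eq, hxeq]
      rw [Set.singleton_inter_eq_empty]
      exact fun h => h.2 hxL
    obtain ⟨F, hFV, hFC', hFT⟩ := hclo _ hVopen hF₀V
    have hFsubG : (F : Set E) ⊆ G := by
      intro y hy
      have hyK : y ∈ K := hFT.2 hy
      have hnot : y ∉ K \ interior L := by
        intro hmem
        have : y ∈ (F : Set E) ∩ (K \ interior L) := ⟨hy, hmem⟩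
        rw [hFV] at this
        exact this
      have hyL : y ∈ interior L := by
        by_contra h
        exact hnot ⟨hyK, h⟩
      exact hLG (interior_subset hyL)
    have hFf : F ∈ ⋂₀ f := by
      intro A hA
      have hAsing : ∀ y ∈ (F : Set E), sing y ∈ A := fun y hy => hFsubG hy A hA
      rcases hfs hA with ⟨K', hK', rfl⟩ | ⟨G', hG', rfl⟩
      · simp only [missing, mem_setOf_eq]
        rw [Set.eq_empty_iff_forall_notMem]
        rintro y ⟨hyF, hyK'⟩
        have := hAsing y hyF
        simp only [missing, sing, mem_setOf_eq, Closeds.coe_mk,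
          Set.singleton_inter_eq_empty] at this
        exact this hyK'
      · obtain ⟨y, hyF⟩ := hFT.1
        have := hAsing y hyF
        simp only [_root_.hitting, sing, mem_setOf_eq, Closeds.coe_mk,
          Set.singleton_inter_nonempty] at this
        exact ⟨y, hyF, this⟩
    exact hvC hFf hFC'

/-- weak convergence on `(F, τ_uF)` together with the strengthened
asymptotic compact-boundedness and `Q`-a.s. at-most-one-point limits implies
weak convergence on `(F, τ_F)`. -/
theorem stmt_7 {E : Type*} [TopologicalSpace E] [LocallyCompactSpace E]
    [SecondCountableTopology E] [T2Space E] {ι : Type*} (l : Filter ι) [l.NeBot]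
    (P : ι → @Measure (Closeds E) (borelFell E)) (Q : @Measure (Closeds E) (borelFell E))
    (hP : ∀ i, IsProbabilityMeasure (P i)) (hQ : IsProbabilityMeasure Q)
    (h1 : WeakConvTo l (upperFell E) P Q)
    (h2 : ∀ ε : ℝ≥0∞, 0 < ε → ∃ K : Set E, IsCompact K ∧
      1 - ε ≤ l.liminf (fun i =>
        P i {F : Closeds E | (F : Set E).Nonempty ∧ (F : Set E) ⊆ K}))
    (h3 : Q {F : Closeds E | (F : Set E).Subsingleton} = 1) :
    WeakConvTo l (fell E) P Q := by
  intro C hC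
  have hSmeas : MeasurableSet[borelFell E] {F : Closeds E | (F : Set E).Subsingleton} := by
    have hopen : @IsOpen _ (fell E) {F : Closeds E | (F : Set E).Subsingleton}ᶜ := by
      letI := fell E
      exact (isClosed_subsingleton_fell (E := E)).isOpen_compl
    simpa using (measurableSet_of_fell_open hopen).compl
  refine ENNReal.le_of_forall_pos_le_add fun ε hε hQC => ?_
  have hε' : (0 : ℝ≥0∞) < ε := by exact_mod_cast hε
  obtain ⟨K, hK, hKb⟩ := h2 ε hε'
  set T : Set (Closeds E) := {F : Closeds E | (F : Set E).Nonempty ∧ (F : Set E) ⊆ K} with hT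
  have hTmeas : MeasurableSet[borelFell E] T := by
    have heq : T = _root_.hitting univ ∩ (_root_.hitting Kᶜ)ᶜ := by
      ext F
      simp only [hT, mem_setOf_eq, _root_.hitting, Set.mem_inter_iff, mem_compl_iff,
        Set.inter_univ, Set.inter_compl_nonempty_iff, not_not]
    rw [heq]
    exact (measurableSet_of_fell_open (isOpen_hitting_fell isOpen_univ)).inter
      (measurableSet_of_fell_open (isOpen_hitting_fell hK.isClosed.isOpen_compl)).compl
  set D : Set (Closeds E) := @closure _ (upperFell E) (C ∩ T) with hD
  have hDclosed : @IsClosed _ (upperFell E) D := by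
    letI := upperFell E
    exact isClosed_closure
  have hptwise : ∀ i, P i C ≤ P i D + P i Tᶜ := by
    intro i
    have hsub : C ⊆ D ∪ Tᶜ := by
      letI := upperFell E
      intro F hF
      by_cases hFT : F ∈ T
      · exact Or.inl (subset_closure ⟨hF, hFT⟩)
      · exact Or.inr hFT
    exact (measure_mono hsub).trans (measure_union_le _ _)
  have hcompl : l.limsup (fun i => P i Tᶜ) ≤ ε := by
    have heq : ∀ i, P i Tᶜ = 1 - P i T := by
      intro i
      have := hP i
      exact prob_compl_eq_one_sub hTmeas
    calc l.limsup (fun i => P i Tᶜ) = l.limsup (fun i => 1 - P i T) := by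
          simp_rw [heq]
      _ = 1 - l.liminf (fun i => P i T) := ENNReal.limsup_const_sub l _ ENNReal.one_ne_top
      _ ≤ 1 - (1 - ε) := tsub_le_tsub_left hKb 1
      _ ≤ ε := tsub_le_iff_right.mpr le_add_tsub
  have hQD : Q D ≤ Q C := by
    have hsplit : Q (D ∩ {F : Closeds E | (F : Set E).Subsingleton}) +
        Q (D \ {F : Closeds E | (F : Set E).Subsingleton}) = Q D :=
      measure_inter_add_diff D hSmeas
    have hnull : Q (D \ {F : Closeds E | (F : Set E).Subsingleton}) = 0 := by
      have hle : Q (D \ {F : Closeds E | (F : Set E).Subsingleton}) ≤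
          Q {F : Closeds E | (F : Set E).Subsingleton}ᶜ :=
        measure_mono (diff_subset_compl _ _)
      have hc : Q {F : Closeds E | (F : Set E).Subsingleton}ᶜ = 0 := by
        rw [prob_compl_eq_one_sub hSmeas, h3, tsub_self]
      exact le_antisymm (hc ▸ hle) (zero_le)
    have hsubC : D ∩ {F : Closeds E | (F : Set E).Subsingleton} ⊆ C := by
      rintro F ⟨hFD, hFS⟩
      exact key_lemma hC hK hFS hFD
    calc Q D = Q (D ∩ {F : Closeds E | (F : Set E).Subsingleton}) +
        Q (D \ {F : Closeds E | (F : Set E).Subsingleton}) := hsplit.symm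
      _ = Q (D ∩ {F : Closeds E | (F : Set E).Subsingleton}) := by rw [hnull, add_zero]
      _ ≤ Q C := measure_mono hsubC
  calc l.limsup (fun i => P i C)
      ≤ l.limsup (fun i => P i D + P i Tᶜ) :=
        limsup_le_limsup (Eventually.of_forall hptwise)
    _ ≤ l.limsup (fun i => P i D) + l.limsup (fun i => P i Tᶜ) := my_limsup_add_le l _ _
    _ ≤ Q D + ε := add_le_add (h1 D hDclosed) hcompl
    _ ≤ Q C + ε := add_le_add_left hQD _
end

section
/- Let (C_α) and (D_α) be nets of random closed sets in E (on possibly different probability spaces) with limsup_α P_α(D_α ⊄ C_α) = 0. If C_α converges in distribution to C in (F, τ_uF), then D_α converges in distribution to C in (F, τ_uF). -/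
open TopologicalSpace MeasureTheory Filter Set
open scoped ENNReal

/-- Every `upperFell`-open set is downward closed. -/
lemma upperFell_open_downward {E : Type*} [TopologicalSpace E] {U : Set (Closeds E)}
    (hU : @IsOpen _ (upperFell E) U) :
    ∀ F G : Closeds E, (F : Set E) ⊆ (G : Set E) → G ∈ U → F ∈ U := by
  induction hU with
  | basic V hV =>
    obtain ⟨K, -, rfl⟩ := hV
    intro F G hFG hG
    simp only [missing, Set.mem_setOf_eq] at hG ⊢
    exact Set.eq_empty_of_subset_empty (hG ▸ Set.inter_subset_inter_left K hFG)
  | univ => intro F G _ _; trivial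
  | inter V W _ _ ihV ihW =>
    intro F G hFG hG
    exact ⟨ihV F G hFG hG.1, ihW F G hFG hG.2⟩
  | sUnion S _ ih =>
    rintro F G hFG ⟨V, hV, hGV⟩
    exact ⟨V, hV, ih V hV F G hFG hGV⟩

/-- Every `upperFell`-closed set is upward closed. -/
lemma upperFell_closed_upward {E : Type*} [TopologicalSpace E] {S : Set (Closeds E)}
    (hS : @IsClosed _ (upperFell E) S) :
    ∀ F G : Closeds E, (F : Set E) ⊆ (G : Set E) → F ∈ S → G ∈ S := by
  intro F G hFG hF
  by_contra hG
  exact (upperFell_open_downward hS.isOpen_compl F G hFG hG) hF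

/-- An `upperFell`-closed set is measurable for the Borel σ-algebra of the Fell topology. -/
lemma upperFell_closed_measurable {E : Type*} [TopologicalSpace E] {S : Set (Closeds E)}
    (hS : @IsClosed _ (upperFell E) S) : @MeasurableSet _ (borelFell E) S := by
  have hle : fell E ≤ upperFell E := by
    apply le_generateFrom
    intro U hU
    exact isOpen_generateFrom_of_mem (Set.mem_union_left _ hU)
  have hopen : @IsOpen _ (fell E) Sᶜ := hle _ hS.isOpen_compl
  have : @MeasurableSet _ (borelFell E) Sᶜ :=
    MeasurableSpace.measurableSet_generateFrom hopen
  simpa using this.compl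

/-- if `limsup_α P_α(D_α ⊄ C_α) = 0` and `C_α →_D C` in
`(F, τ_uF)`, then `D_α →_D C` in `(F, τ_uF)`. -/
theorem stmt_8 {E : Type*} [TopologicalSpace E] [LocallyCompactSpace E]
    [SecondCountableTopology E] [T2Space E] {ι : Type*} (l : Filter ι) [l.NeBot]
    (Ω : ι → Type*) (mΩ : ∀ i, MeasurableSpace (Ω i))
    (μ : ∀ i, @Measure (Ω i) (mΩ i)) (hμ : ∀ i, IsProbabilityMeasure (μ i))
    {Ω₀ : Type*} (mΩ₀ : MeasurableSpace Ω₀) (μ₀ : @Measure Ω₀ mΩ₀)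
    (hμ₀ : IsProbabilityMeasure μ₀)
    (C : ∀ i, Ω i → Closeds E) (D : ∀ i, Ω i → Closeds E) (C₀ : Ω₀ → Closeds E)
    (hC : ∀ i, @Measurable _ _ (mΩ i) (borelFell E) (C i))
    (hD : ∀ i, @Measurable _ _ (mΩ i) (borelFell E) (D i))
    (hC₀ : @Measurable _ _ mΩ₀ (borelFell E) C₀)
    (hsub : l.limsup (fun i => μ i {ω | ¬ (D i ω : Set E) ⊆ (C i ω : Set E)}) = 0)
    (hconv : WeakConvTo l (upperFell E)
      (fun i => @Measure.map _ _ (mΩ i) (borelFell E) (C i) (μ i))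
      (@Measure.map _ _ mΩ₀ (borelFell E) C₀ μ₀)) :
    WeakConvTo l (upperFell E)
      (fun i => @Measure.map _ _ (mΩ i) (borelFell E) (D i) (μ i))
      (@Measure.map _ _ mΩ₀ (borelFell E) C₀ μ₀) := by
  intro S hS
  have hSm := upperFell_closed_measurable hS
  have hup := upperFell_closed_upward hS
  -- pointwise bound
  have key : ∀ i, (@Measure.map _ _ (mΩ i) (borelFell E) (D i) (μ i)) S ≤
      (@Measure.map _ _ (mΩ i) (borelFell E) (C i) (μ i)) S +
      μ i {ω | ¬ (D i ω : Set E) ⊆ (C i ω : Set E)} := by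
    intro i
    rw [Measure.map_apply (hD i) hSm, Measure.map_apply (hC i) hSm]
    refine le_trans (measure_mono ?_) (measure_union_le _ _)
    intro ω hω
    by_cases h : (D i ω : Set E) ⊆ (C i ω : Set E)
    · exact Or.inl (hup _ _ h hω)
    · exact Or.inr h
  refine ENNReal.le_of_forall_pos_le_add fun ε hε _ => ?_
  have hev : ∀ᶠ i in l,
      μ i {ω | ¬ (D i ω : Set E) ⊆ (C i ω : Set E)} < (ε : ℝ≥0∞) := by
    have h0 : l.limsup (fun i => μ i {ω | ¬ (D i ω : Set E) ⊆ (C i ω : Set E)}) < (ε : ℝ≥0∞) := by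
      rw [hsub]; exact_mod_cast hε
    exact eventually_lt_of_limsup_lt h0
  have h1 : l.limsup (fun i => (@Measure.map _ _ (mΩ i) (borelFell E) (D i) (μ i)) S) ≤
      l.limsup (fun i => (@Measure.map _ _ (mΩ i) (borelFell E) (C i) (μ i)) S + (ε : ℝ≥0∞)) := by
    refine limsup_le_limsup ?_
    filter_upwards [hev] with i hi
    exact le_trans (key i) (add_le_add_right hi.le _)
  rw [limsup_add_const l _ (ε : ℝ≥0∞) (by isBoundedDefault) (by isBoundedDefault)] at h1
  exact h1.trans (add_le_add_left (hconv S hS) _)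
end

section
/- For an arbitrary subset A of E, the interior of the hitting set H(A) = {F closed : F ∩ A ≠ ∅} in the Fell topology equals H(Int(A)), the hitting set of the interior of A. -/
open TopologicalSpace MeasureTheory Filter Set
open scoped ENNReal

/-- for an arbitrary subset `A` of `E`, the Fell-interior of the
hitting set of `A` is the hitting set of the interior of `A`. -/
theorem stmt_12 {E : Type*} [TopologicalSpace E] [LocallyCompactSpace E]
    [SecondCountableTopology E] [T2Space E] (A : Set E) :
    @interior (Closeds E) (fell E) (hitting A) = hitting (interior A) := by
  classical
  letI t : TopologicalSpace (Closeds E) := fell E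
  set S : Set (Set (Closeds E)) :=
    ({U | ∃ K : Set E, IsCompact K ∧ U = missing K} ∪
      {U | ∃ G : Set E, IsOpen G ∧ U = hitting G}) with hSdef
  have hS : IsTopologicalBasis
      ((fun f => Set.sInter f) '' {f : Set (Set (Closeds E)) | f.Finite ∧ f ⊆ S}) :=
    isTopologicalBasis_of_subbasis rfl
  apply Set.Subset.antisymm
  · intro F hF
    obtain ⟨B, hBmem, hFB, hBsub⟩ :=
      hS.exists_subset_of_mem_open hF (isOpen_interior)
    obtain ⟨f, ⟨hffin, hfS⟩, rfl⟩ := hBmem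
    have hBA : ⋂₀ f ⊆ hitting A := hBsub.trans interior_subset
    by_contra hnot
    have hFIA : (F : Set E) ∩ interior A = ∅ := by
      by_contra h
      exact hnot (Set.nonempty_iff_ne_empty.mpr h)
    -- split f into missings and hittings
    set fm := {u ∈ f | ∃ K : Set E, IsCompact K ∧ u = missing K} with hfmdef
    set fh := f \ fm with hfhdef
    set Kmap : Set (Closeds E) → Set E := fun u =>
      if h : ∃ K : Set E, IsCompact K ∧ u = missing K then h.choose else ∅
      with hKmapdef
    have hKm : ∀ u ∈ fm, IsCompact (Kmap u) ∧ u = missing (Kmap u) := by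
      intro u hu
      simp only [hKmapdef, dif_pos hu.2]
      exact hu.2.choose_spec
    set K : Set E := ⋃ u ∈ fm, Kmap u with hKdef
    have hKcompact : IsCompact K := by
      apply Set.Finite.isCompact_biUnion (hffin.subset (Set.sep_subset _ _))
      exact fun u hu => (hKm u hu).1
    have hFK : Disjoint (F : Set E) K := by
      rw [Set.disjoint_iff_inter_eq_empty, hKdef, Set.inter_iUnion₂]
      simp only [Set.iUnion_eq_empty]
      intro u hu
      have := hFB u hu.1
      rw [(hKm u hu).2] at this
      exact this
    have hGm : ∀ u ∈ fh, ∃ G : Set E, IsOpen G ∧ u = hitting G := by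
      intro u hu
      rcases hfS hu.1 with h | h
      · exact absurd ⟨hu.1, h⟩ hu.2
      · exact h
    set Gmap : Set (Closeds E) → Set E := fun u =>
      if h : ∃ G : Set E, IsOpen G ∧ u = hitting G then h.choose else ∅
      with hGmapdef
    have hGmspec : ∀ u ∈ fh, IsOpen (Gmap u) ∧ u = hitting (Gmap u) := by
      intro u hu
      simp only [hGmapdef, dif_pos (hGm u hu)]
      exact (hGm u hu).choose_spec
    -- choose a point in each hitting set avoiding K and A
    have hy : ∀ u ∈ fh, ∃ yu : E, yu ∈ Gmap u ∧ yu ∉ K ∧ yu ∉ A := by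
      intro u hu
      obtain ⟨hGopen, hGeq⟩ := hGmspec u hu
      have hFu : F ∈ u := hFB u hu.1
      rw [hGeq] at hFu
      obtain ⟨x, hxF, hxG⟩ := hFu
      have hxK : x ∉ K := fun hxK => hFK.ne_of_mem hxF hxK rfl
      have hW : IsOpen (Gmap u ∩ Kᶜ) :=
        hGopen.inter hKcompact.isClosed.isOpen_compl
      have hxW : x ∈ Gmap u ∩ Kᶜ := ⟨hxG, hxK⟩
      have hWA : ¬(Gmap u ∩ Kᶜ ⊆ A) := by
        intro hsub
        have : x ∈ interior A := mem_interior.mpr ⟨_, hsub, hW, hxW⟩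
        exact Set.eq_empty_iff_forall_notMem.mp hFIA x ⟨hxF, this⟩
      obtain ⟨yu, hyuW, hyuA⟩ := Set.not_subset.mp hWA
      exact ⟨yu, hyuW.1, hyuW.2, hyuA⟩
    haveI : Nonempty E := ⟨(interior_subset hF).choose⟩
    choose! y hy1 hy2 hy3 using hy
    set D : Set E := y '' fh with hDdef
    have hDfin : D.Finite := (hffin.subset Set.diff_subset).image y
    have hDclosed : IsClosed D := hDfin.isClosed
    set F' : Closeds E := ⟨D, hDclosed⟩ with hF'def
    have hF'mem : F' ∈ ⋂₀ f := by
      intro u hu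
      by_cases hum : u ∈ fm
      · rw [(hKm u hum).2]
        show (D ∩ Kmap u) = ∅
        apply Set.eq_empty_iff_forall_notMem.mpr
        rintro z ⟨hzD, hzK⟩
        obtain ⟨v, hv, rfl⟩ := hzD
        exact hy2 v hv (Set.mem_biUnion hum hzK)
      · have huh : u ∈ fh := ⟨hu, hum⟩
        rw [(hGmspec u huh).2]
        exact ⟨y u, Set.mem_image_of_mem y huh, hy1 u huh⟩
    obtain ⟨z, hzD, hzA⟩ := hBA hF'mem
    obtain ⟨v, hv, rfl⟩ := hzD
    exact hy3 v hv hzA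
  · apply interior_maximal
    · exact fun F hF => hF.mono (Set.inter_subset_inter_right _ interior_subset)
    · exact TopologicalSpace.isOpen_generateFrom_of_mem
        (Or.inr ⟨interior A, isOpen_interior, rfl⟩)
end

section
/- Let (F_α) be a net of closed subsets of E. (a) If F_α → {x} in the upper Fell topology and there are a compact K and an index α₀ with ∅ ≠ F_α ⊆ K for all α ≥ α₀, then F_α → {x} in the Fell topology. (b) F_α → ∅ in the upper Fell topology if and only if F_α → ∅ in the Fell topology. -/
open TopologicalSpace MeasureTheory Filter Set
open scoped ENNReal

lemma upperFell_eventually {E : Type*} [TopologicalSpace E] {ι : Type*} {l : Filter ι}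
    {Fn : ι → Closeds E} {A : Closeds E}
    (h : Tendsto Fn l (@nhds (Closeds E) (upperFell E) A))
    {K : Set E} (hK : IsCompact K) (hA : A ∈ missing K) :
    ∀ᶠ i in l, Fn i ∈ missing K := by
  letI := upperFell E
  have hopen : IsOpen (missing K) :=
    TopologicalSpace.isOpen_generateFrom_of_mem ⟨K, hK, rfl⟩
  exact h (hopen.mem_nhds hA)

/-- (a) a net of closed sets converging to a singleton in the
upper Fell topology and eventually non-empty and contained in a fixed compact
set converges in the Fell topology; (b) convergence to `∅` in the upper Fell
topology is equivalent to convergence to `∅` in the Fell topology. -/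
theorem stmt_17 {E : Type*} [TopologicalSpace E] [LocallyCompactSpace E]
    [SecondCountableTopology E] [T2Space E] {ι : Type*} (l : Filter ι) [l.NeBot]
    (Fn : ι → Closeds E) :
    (∀ x : E,
      Tendsto Fn l (@nhds (Closeds E) (upperFell E) ⟨{x}, isClosed_singleton⟩) →
      (∃ K : Set E, IsCompact K ∧
        ∀ᶠ i in l, (Fn i : Set E).Nonempty ∧ (Fn i : Set E) ⊆ K) →
      Tendsto Fn l (@nhds (Closeds E) (fell E) ⟨{x}, isClosed_singleton⟩)) ∧
    (Tendsto Fn l (@nhds (Closeds E) (upperFell E) ⊥) ↔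
      Tendsto Fn l (@nhds (Closeds E) (fell E) ⊥)) := by
  constructor
  · rintro x hup ⟨K, hK, hev⟩
    unfold fell
    rw [tendsto_nhds_generateFrom_iff]
    rintro s (⟨K', hK', rfl⟩ | ⟨G, hG, rfl⟩) hmem
    · exact upperFell_eventually hup hK' hmem
    · have hx : x ∈ G := by
        simpa [_root_.hitting] using hmem
      have hKG : IsCompact (K \ G) := hK.diff hG
      have hA : (⟨{x}, isClosed_singleton⟩ : Closeds E) ∈ missing (K \ G) := by
        simp [missing, Set.singleton_inter_eq_empty, hx]
      have h1 := upperFell_eventually hup hKG hA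
      filter_upwards [hev, h1] with i hi h2
      obtain ⟨⟨y, hy⟩, hsub⟩ := hi
      refine ⟨y, hy, ?_⟩
      by_contra hyG
      simp only [missing, Set.mem_setOf_eq, Set.eq_empty_iff_forall_notMem] at h2
      exact h2 y ⟨hy, hsub hy, hyG⟩
  · constructor
    · intro hup
      unfold fell
      rw [tendsto_nhds_generateFrom_iff]
      rintro s (⟨K', hK', rfl⟩ | ⟨G, hG, rfl⟩) hmem
      · exact upperFell_eventually hup hK' hmem
      · exfalso
        simp [_root_.hitting] at hmem
    · intro h
      have hle : fell E ≤ upperFell E := generateFrom_anti Set.subset_union_left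
      exact h.mono_right (nhds_mono hle)
end

section
/- The space of probability measures on the hyperspace (F, τ_uF) equipped with the weak topology is compact; moreover it is not Hausdorff whenever E is non-empty, since every net converges to δ_E and also to any measure dominating a given limit. -/
open TopologicalSpace MeasureTheory Filter Set
open scoped ENNReal

/-- The right-order topology on `ℝ`, generated by the rays `(a, ∞)`. -/
def rightOrderTop : TopologicalSpace ℝ :=
  generateFrom {s : Set ℝ | ∃ a : ℝ, s = Ioi a}

/-- The space of Borel probability measures on the hyperspace of closed sets. -/
def ProbUF (E : Type*) [TopologicalSpace E] : Type _ :=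
  {μ : @Measure (Closeds E) (borelFell E) // IsProbabilityMeasure μ}

/-- The weak topology on `ProbUF E`: the initial topology with respect to the
evaluation maps at `τ_uF`-open sets, into `ℝ` with the right-order topology. -/
def weakTopUF (E : Type*) [TopologicalSpace E] : TopologicalSpace (ProbUF E) :=
  ⨅ O : {s : Set (Closeds E) // @IsOpen _ (upperFell E) s},
    TopologicalSpace.induced (fun μ : ProbUF E => (μ.1 O.1).toReal) rightOrderTop

section Aux

variable {E : Type*} [TopologicalSpace E]

lemma upperFell_top_mem {O : Set (Closeds E)} (hO : @IsOpen _ (upperFell E) O) :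
    (⊤ : Closeds E) ∈ O → O = Set.univ := by
  have hO' : TopologicalSpace.GenerateOpen
      {U | ∃ K : Set E, IsCompact K ∧ U = missing K} O := hO
  clear hO
  induction hO' with
  | basic s hs =>
      intro hmem
      obtain ⟨K, hK, rfl⟩ := hs
      have hKe : K = ∅ := by
        have h := hmem
        simp only [missing, mem_setOf_eq, Closeds.coe_top, univ_inter] at h
        exact h
      subst hKe
      ext F
      simp [missing]
  | univ => intro _; rfl
  | inter s t _ _ ihs iht =>
      intro hmem
      rw [ihs hmem.1, iht hmem.2, univ_inter]
  | sUnion S _ ih =>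
      intro hmem
      obtain ⟨s, hsS, hts⟩ := hmem
      exact eq_univ_of_univ_subset ((ih s hsS hts) ▸ subset_sUnion_of_mem hsS)

lemma upperFell_open_fell {O : Set (Closeds E)} (hO : @IsOpen _ (upperFell E) O) :
    @IsOpen _ (fell E) O := by
  have hle : fell E ≤ upperFell E :=
    generateFrom_anti subset_union_left
  exact (isOpen_implies_isOpen_iff.mpr hle) O hO

lemma fell_open_measurable {O : Set (Closeds E)} (hO : @IsOpen _ (fell E) O) :
    MeasurableSet[borelFell E] O :=
  MeasurableSpace.measurableSet_generateFrom hO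

lemma nhds_diracTop_eq_top (E : Type*) [TopologicalSpace E] :
    @nhds (ProbUF E) (weakTopUF E)
      ⟨@Measure.dirac _ (borelFell E) ⊤,
        @Measure.dirac.isProbabilityMeasure _ (borelFell E) ⊤⟩ = ⊤ := by
  letI : MeasurableSpace (Closeds E) := borelFell E
  set δ : ProbUF E := ⟨Measure.dirac ⊤, Measure.dirac.isProbabilityMeasure⟩ with hδ
  refine top_unique ?_
  have h1 : @nhds (ProbUF E) (weakTopUF E) δ =
      ⨅ O : {s : Set (Closeds E) // @IsOpen _ (upperFell E) s},
        @nhds (ProbUF E)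
          (TopologicalSpace.induced (fun μ : ProbUF E => (μ.1 O.1).toReal) rightOrderTop)
          δ := nhds_iInf
  rw [h1]
  refine le_iInf fun O => ?_
  set f : ProbUF E → ℝ := fun μ => (μ.1 O.1).toReal with hf
  rw [@nhds_induced _ _ rightOrderTop f δ]
  rw [← map_le_iff_le_comap]
  rw [show rightOrderTop = generateFrom {s : Set ℝ | ∃ a : ℝ, s = Ioi a} from rfl,
    TopologicalSpace.nhds_generateFrom]
  refine le_iInf₂ fun s hs => ?_
  obtain ⟨hmem, a, rfl⟩ := hs
  rw [le_principal_iff, mem_map, mem_top]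
  -- show f ⁻¹' Ioi a = univ
  ext μ
  simp only [mem_preimage, mem_Ioi, mem_univ, iff_true]
  by_cases htop : (⊤ : Closeds E) ∈ O.1
  · have hOuniv : O.1 = Set.univ := upperFell_top_mem O.2 htop
    have h1' : f μ = 1 := by
      have := μ.2
      simp [hf, hOuniv, measure_univ]
    have h2' : f δ = 1 := by
      simp [hf, hδ, hOuniv, measure_univ]
    rw [h1']
    rw [h2'] at hmem
    exact hmem
  · have hzero : (Measure.dirac (⊤ : Closeds E)) O.1 = 0 := by
      rw [MeasureTheory.Measure.dirac_apply' _ (fell_open_measurable (upperFell_open_fell O.2))]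
      exact Set.indicator_of_notMem htop _
    have ha : a < 0 := by
      have hfδ : f δ = 0 := by simp [hf, hδ, hzero]
      rw [hfδ] at hmem
      exact hmem
    exact lt_of_lt_of_le ha ENNReal.toReal_nonneg

end Aux

/-- the space of probability measures on `(F, τ_uF)` with the
weak topology is compact, and it is not Hausdorff whenever `E` is non-empty. -/
theorem stmt_19 {E : Type*} [TopologicalSpace E] [LocallyCompactSpace E]
    [SecondCountableTopology E] [T2Space E] :
    @CompactSpace (ProbUF E) (weakTopUF E) ∧
    (Nonempty E → ¬ @T2Space (ProbUF E) (weakTopUF E)) := by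
  letI : MeasurableSpace (Closeds E) := borelFell E
  letI := weakTopUF E
  set δ : ProbUF E := ⟨Measure.dirac ⊤, Measure.dirac.isProbabilityMeasure⟩ with hδ
  have hnhds : @nhds (ProbUF E) (weakTopUF E) δ = ⊤ := nhds_diracTop_eq_top E
  constructor
  · refine ⟨fun f hf hle => ⟨δ, mem_univ _, ?_⟩⟩
    show Filter.NeBot (@nhds (ProbUF E) (weakTopUF E) δ ⊓ f)
    rwa [hnhds, top_inf_eq]
  · rintro ⟨e⟩ ht2
    set μ₂ : ProbUF E := ⟨Measure.dirac ⊥, Measure.dirac.isProbabilityMeasure⟩ with hμ₂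
    have hMopen : @IsOpen _ (upperFell E) (missing ({e} : Set E)) :=
      TopologicalSpace.GenerateOpen.basic _ ⟨{e}, isCompact_singleton, rfl⟩
    have hMmeas : MeasurableSet[borelFell E] (missing ({e} : Set E)) :=
      fell_open_measurable (upperFell_open_fell hMopen)
    have hne : δ ≠ μ₂ := by
      intro h
      have h' : Measure.dirac (⊤ : Closeds E) = Measure.dirac (⊥ : Closeds E) :=
        congrArg Subtype.val h
      have hv1 : (Measure.dirac (⊤ : Closeds E)) (missing ({e} : Set E)) = 0 := by
        rw [MeasureTheory.Measure.dirac_apply' _ hMmeas]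
        refine Set.indicator_of_notMem ?_ _
        simp only [missing, mem_setOf_eq, Closeds.coe_top, univ_inter]
        exact singleton_ne_empty e
      have hv2 : (Measure.dirac (⊥ : Closeds E)) (missing ({e} : Set E)) = 1 := by
        rw [MeasureTheory.Measure.dirac_apply' _ hMmeas]
        refine Set.indicator_of_mem ?_ _
        show ((⊥ : Closeds E) : Set E) ∩ {e} = ∅
        rw [Closeds.coe_bot]
        exact Set.empty_inter _
      rw [h'] at hv1
      rw [hv1] at hv2
      exact zero_ne_one hv2
    obtain ⟨U, V, hU, hV, hδU, hμV, hUV⟩ := t2_separation hne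
    have hUnhds : U ∈ @nhds (ProbUF E) (weakTopUF E) δ := hU.mem_nhds hδU
    rw [hnhds, mem_top] at hUnhds
    exact Set.disjoint_left.mp hUV (hUnhds ▸ mem_univ μ₂) hμV
end
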